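/- In the commutative monoid M presented by generators u, v and the relation u + v = m·u + n·v (with m ≥ 2, n ≥ 1), the inequality (m−1)·u ≤ v fails. -/

import Mathlib

/-- The congruence on `ℕ × ℕ` (the free commutative monoid on generators
`u = (1,0)` and `v = (0,1)`) generated by the relation `u + v = m·u + n·v`. -/
def conUV (m n : ℕ) : AddCon (ℕ × ℕ) :=
  addConGen (fun a b => a = ((1, 1) : ℕ × ℕ) ∧ b = ((m, n) : ℕ × ℕ))

/-- An auxiliary congruence: relate `a b` iff they agree on being `(0,1)` and on
being `(0,0)`. -/
def auxCon : AddCon (ℕ × ℕ) where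
  r a b := (a = ((0,1) : ℕ × ℕ) ↔ b = (0,1)) ∧ (a = ((0,0) : ℕ × ℕ) ↔ b = (0,0))
  iseqv := by
    constructor
    · intro a; exact ⟨Iff.rfl, Iff.rfl⟩
    · intro a b h; exact ⟨h.1.symm, h.2.symm⟩
    · intro a b c h1 h2; exact ⟨h1.1.trans h2.1, h1.2.trans h2.2⟩
  add' := by
    intro w x y z h1 h2
    have key : ∀ p q : ℕ × ℕ, p + q = ((0,1) : ℕ × ℕ) ↔
        (p = (0,0) ∧ q = (0,1)) ∨ (p = (0,1) ∧ q = (0,0)) := by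
      intro p q
      simp only [Prod.ext_iff, Prod.fst_add, Prod.snd_add]
      omega
    have key0 : ∀ p q : ℕ × ℕ, p + q = ((0,0) : ℕ × ℕ) ↔
        (p = (0,0) ∧ q = (0,0)) := by
      intro p q
      simp only [Prod.ext_iff, Prod.fst_add, Prod.snd_add]
      omega
    constructor
    · rw [key, key]
      rw [h1.1, h1.2, h2.1, h2.2]
    · rw [key0, key0, h1.2, h2.2]

/-- In the monoid `⟨u, v ∣ u + v = m·u + n·v⟩` with `m ≥ 2`, `n ≥ 1`,
the inequality `(m-1)·u ≤ v` fails in the algebraic preorder. -/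
theorem stmt3 (m n : ℕ) (hm : 2 ≤ m) (hn : 1 ≤ n) :
    ¬ ∃ x : (conUV m n).Quotient,
        (m - 1) • ((conUV m n).mk' (1, 0)) + x = (conUV m n).mk' (0, 1) := by
  rintro ⟨x, hx⟩
  obtain ⟨a, rfl⟩ := AddCon.mk'_surjective x
  have hle : conUV m n ≤ auxCon := by
    apply AddCon.addConGen_le.mpr
    rintro p q ⟨rfl, rfl⟩
    constructor
    · simp only [Prod.ext_iff]
      omega
    · simp only [Prod.ext_iff]
      omega
  rw [← AddMonoidHom.map_nsmul, ← AddMonoidHom.map_add] at hx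
  have hx' : conUV m n ((m - 1) • ((1,0) : ℕ × ℕ) + a) (0,1) :=
    ((conUV m n).eq).mp hx
  clear hx; rename' hx' => hx
  have := hle hx
  have h1 : (m - 1) • ((1,0) : ℕ × ℕ) + a = (0,1) := this.1.mpr rfl
  rw [Prod.ext_iff] at h1
  simp [Prod.fst_add, smul_eq_mul] at h1
  omega
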